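/- arXiv:1905.13513 — 2 statements merged into one kernel-verified Lean document; each statement's English description precedes it below -/
import Mathlib

section
/- Let W, Q be finite-dimensional real inner product spaces, A : W → W symmetric positive definite, B : W → Q linear. Then for all (w,p), (r,q) ∈ W × Q: ⟨Aw, r⟩ + ⟨Bᵀp, r⟩ + ⟨A^{-1}Bᵀp, Bᵀq⟩ ≤ (‖w‖_A² + 2‖Bᵀp‖²_{A^{-1}})^{1/2} · (2‖r‖_A² + ‖Bᵀq‖²_{A^{-1}})^{1/2}, where ‖w‖_A² = ⟨Aw,w⟩ and ‖v‖²_{A^{-1}} = ⟨A^{-1}v,v⟩. -/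
open RealInnerProductSpace

lemma aux_cs {W : Type*} [NormedAddCommGroup W] [InnerProductSpace ℝ W]
    (A : W →ₗ[ℝ] W)
    (hAsym : ∀ u v : W, ⟪A u, v⟫ = ⟪u, A v⟫)
    (hnn : ∀ v : W, 0 ≤ ⟪A v, v⟫) (u v : W) :
    ⟪A u, v⟫ ≤ Real.sqrt ⟪A u, u⟫ * Real.sqrt ⟪A v, v⟫ := by
  have hsym' : ⟪A v, u⟫ = ⟪A u, v⟫ := by rw [hAsym v u, real_inner_comm]
  have expand : ∀ x y : ℝ, ⟪A (x • u + y • v), x • u + y • v⟫ =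
      x ^ 2 * ⟪A u, u⟫ + 2 * x * y * ⟪A u, v⟫ + y ^ 2 * ⟪A v, v⟫ := by
    intro x y
    simp only [map_add, map_smul, inner_add_left, inner_add_right,
      real_inner_smul_left, real_inner_smul_right]
    rw [hsym']; ring
  rcases eq_or_lt_of_le (hnn v) with h0 | hpos
  · -- ⟪A v, v⟫ = 0; show ⟪A u, v⟫ ≤ 0
    have hmle : ⟪A u, v⟫ ≤ 0 := by
      by_contra h
      push_neg at h
      have h1 := hnn ((1:ℝ) • u + (-(⟪A u, u⟫ + 1) / (2 * ⟪A u, v⟫)) • v)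
      rw [expand, ← h0] at h1
      have hne : (⟪A u, v⟫ : ℝ) ≠ 0 := ne_of_gt h
      have hceq : 2 * (1:ℝ) * (-(⟪A u, u⟫ + 1) / (2 * ⟪A u, v⟫)) * ⟪A u, v⟫
          = -(⟪A u, u⟫ + 1) := by field_simp
      rw [hceq] at h1
      nlinarith [h1]
    rw [← h0, Real.sqrt_zero, mul_zero]
    exact hmle
  · have key := hnn ((⟪A v, v⟫ : ℝ) • u + (-⟪A u, v⟫) • v)
    rw [expand] at key
    have hm2 : ⟪A u, v⟫ ^ 2 ≤ ⟪A u, u⟫ * ⟪A v, v⟫ := by nlinarith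
    have habs : |(⟪A u, v⟫ : ℝ)| ≤ Real.sqrt (⟪A u, u⟫ * ⟪A v, v⟫) := by
      have := Real.sqrt_le_sqrt hm2
      rwa [Real.sqrt_sq_eq_abs] at this
    calc (⟪A u, v⟫ : ℝ) ≤ |(⟪A u, v⟫ : ℝ)| := le_abs_self _
      _ ≤ Real.sqrt (⟪A u, u⟫ * ⟪A v, v⟫) := habs
      _ = Real.sqrt ⟪A u, u⟫ * Real.sqrt ⟪A v, v⟫ := Real.sqrt_mul (hnn u) _

lemma aux_comb (a b c d : ℝ) (ha : 0 ≤ a) (hb : 0 ≤ b) (hc : 0 ≤ c) (hd : 0 ≤ d) :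
    a * c + b * c + b * d ≤
      Real.sqrt (a ^ 2 + 2 * b ^ 2) * Real.sqrt (2 * c ^ 2 + d ^ 2) := by
  rw [← Real.sqrt_mul (by positivity)]
  rw [show a * c + b * c + b * d =
      Real.sqrt ((a * c + b * c + b * d) ^ 2) from
    (Real.sqrt_sq (by positivity)).symm]
  apply Real.sqrt_le_sqrt
  nlinarith [sq_nonneg (a*c - b*d), sq_nonneg (a*d - b*c), sq_nonneg (a*c - b*c),
    sq_nonneg (b*c - b*d), mul_nonneg (mul_nonneg ha hb) (mul_nonneg hc hd),
    mul_nonneg (mul_nonneg hb hb) (mul_nonneg hc hd),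
    mul_nonneg (mul_nonneg ha hb) (mul_nonneg hc hc)]

/-- Boundedness of the field of values of the block lower triangular
preconditioned operator. -/
theorem stmt_7 {W Q : Type*}
    [NormedAddCommGroup W] [InnerProductSpace ℝ W] [FiniteDimensional ℝ W]
    [NormedAddCommGroup Q] [InnerProductSpace ℝ Q] [FiniteDimensional ℝ Q]
    (A Ainv : W →ₗ[ℝ] W)
    (hAsym : ∀ u v : W, ⟪A u, v⟫ = ⟪u, A v⟫)
    (hApos : ∀ v : W, v ≠ 0 → 0 < ⟪A v, v⟫)
    (hAinv : ∀ v : W, A (Ainv v) = v)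
    (B : W →ₗ[ℝ] Q) (Bt : Q →ₗ[ℝ] W)
    (hadj : ∀ (w : W) (q : Q), ⟪B w, q⟫ = ⟪w, Bt q⟫) :
    ∀ (w r : W) (p q : Q),
      ⟪A w, r⟫ + ⟪Bt p, r⟫ + ⟪Ainv (Bt p), Bt q⟫ ≤
        Real.sqrt (⟪A w, w⟫ + 2 * ⟪Ainv (Bt p), Bt p⟫) *
          Real.sqrt (2 * ⟪A r, r⟫ + ⟪Ainv (Bt q), Bt q⟫) := by
  have hnn : ∀ v : W, 0 ≤ ⟪A v, v⟫ := by
    intro v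
    by_cases hv : v = 0
    · simp [hv]
    · exact le_of_lt (hApos v hv)
  intro w r p q
  have hAu : A (Ainv (Bt p)) = Bt p := hAinv _
  have hAu' : A (Ainv (Bt q)) = Bt q := hAinv _
  -- the four "norms"
  obtain ⟨a, ha⟩ : ∃ x, x = Real.sqrt ⟪A w, w⟫ := ⟨_, rfl⟩
  obtain ⟨b, hb⟩ : ∃ x, x = Real.sqrt ⟪A (Ainv (Bt p)), Ainv (Bt p)⟫ := ⟨_, rfl⟩
  obtain ⟨c, hc⟩ : ∃ x, x = Real.sqrt ⟪A r, r⟫ := ⟨_, rfl⟩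
  obtain ⟨d, hd⟩ : ∃ x, x = Real.sqrt ⟪A (Ainv (Bt q)), Ainv (Bt q)⟫ := ⟨_, rfl⟩
  have ha2 : (⟪A w, w⟫ : ℝ) = a ^ 2 := by rw [ha, Real.sq_sqrt (hnn w)]
  have hb2 : (⟪A (Ainv (Bt p)), Ainv (Bt p)⟫ : ℝ) = b ^ 2 := by
    rw [hb, Real.sq_sqrt (hnn _)]
  have hc2 : (⟪A r, r⟫ : ℝ) = c ^ 2 := by rw [hc, Real.sq_sqrt (hnn r)]
  have hd2 : (⟪A (Ainv (Bt q)), Ainv (Bt q)⟫ : ℝ) = d ^ 2 := by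
    rw [hd, Real.sq_sqrt (hnn _)]
  have ha0 : 0 ≤ a := ha ▸ Real.sqrt_nonneg _
  have hb0 : 0 ≤ b := hb ▸ Real.sqrt_nonneg _
  have hc0 : 0 ≤ c := hc ▸ Real.sqrt_nonneg _
  have hd0 : 0 ≤ d := hd ▸ Real.sqrt_nonneg _
  have e1 : ⟪A w, r⟫ ≤ a * c := by
    rw [ha, hc]; exact aux_cs A hAsym hnn w r
  have e2 : ⟪Bt p, r⟫ ≤ b * c := by
    have heq : (⟪Bt p, r⟫ : ℝ) = ⟪A (Ainv (Bt p)), r⟫ := by rw [hAu]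
    rw [heq, hb, hc]
    exact aux_cs A hAsym hnn _ r
  have e3 : ⟪Ainv (Bt p), Bt q⟫ ≤ b * d := by
    have heq : (⟪Ainv (Bt p), Bt q⟫ : ℝ) = ⟪A (Ainv (Bt p)), Ainv (Bt q)⟫ := by
      rw [hAsym (Ainv (Bt p)) (Ainv (Bt q)), hAu']
    rw [heq, hb, hd]
    exact aux_cs A hAsym hnn _ _
  have hp2 : (⟪Ainv (Bt p), Bt p⟫ : ℝ) = b ^ 2 := by
    rw [← hb2, hAsym (Ainv (Bt p)) (Ainv (Bt p)), hAu]
  have hq2 : (⟪Ainv (Bt q), Bt q⟫ : ℝ) = d ^ 2 := by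
    rw [← hd2, hAsym (Ainv (Bt q)) (Ainv (Bt q)), hAu']
  rw [hp2, hq2, ha2, hc2]
  have := aux_comb a b c d ha0 hb0 hc0 hd0
  linarith
end

section
/- Let X be a finite-dimensional real vector space with two inner products (·,·)_X and (·,·)_{M^{-1}} whose induced norms satisfy c₁‖x‖²_X ≤ ‖x‖²_{M^{-1}} ≤ c₂‖x‖²_X for all x, with 0 < c₁ ≤ c₂. Let L be a bilinear form on X that is continuous with constant α and satisfies the symmetric inf-sup condition with constant β > 0, both with respect to ‖·‖_X. Then L is continuous with constant α/c₁ and satisfies the inf-sup condition with constant β·c₁/c₂ (up to the appropriate constant factors) with respect to ‖·‖_{M^{-1}}; consequently the operator MA, where ⟨M^{-1}x, y⟩ = (x,y)_{M^{-1}} and ⟨Ax,y⟩ = L(x,y), has condition number κ(MA) ≤ (c₂α)/(c₁β) in the M^{-1}-inner product. -/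
open RealInnerProductSpace

/-- Norm-equivalent preconditioning: the `M⁻¹`-inner product is realized by the
SPD operator `N` (i.e. `(x,y)_{M⁻¹} = ⟪N x, y⟫`) and is norm-equivalent to the
`X`-norm with constants `c₁, c₂`.  If `L` is continuous (constant `α`) and
satisfies the symmetric inf-sup condition (constant `β`) in the `X`-norm, then
`L` is continuous and inf-sup stable with respect to the `M⁻¹`-norm (with the
appropriately rescaled constants), and the preconditioned operator `T = MA`,
characterized by `⟪N (T x), y⟫ = L x y`, has condition number at most
`c₂ α / (c₁ β)` in the `M⁻¹`-norm. -/
theorem stmt_9 {X : Type*}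
    [NormedAddCommGroup X] [InnerProductSpace ℝ X] [FiniteDimensional ℝ X]
    (N : X →ₗ[ℝ] X)
    (hNsym : ∀ x y : X, ⟪N x, y⟫ = ⟪x, N y⟫)
    (hNpos : ∀ x : X, x ≠ 0 → 0 < ⟪N x, x⟫)
    (c₁ c₂ : ℝ) (hc₁ : 0 < c₁) (hc₁₂ : c₁ ≤ c₂)
    (hnorm : ∀ x : X, c₁ * ‖x‖ ^ 2 ≤ ⟪N x, x⟫ ∧ ⟪N x, x⟫ ≤ c₂ * ‖x‖ ^ 2)
    (L : X →ₗ[ℝ] X →ₗ[ℝ] ℝ) (hLsym : ∀ x y : X, L x y = L y x)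
    (α β : ℝ) (hα : 0 < α) (hβ : 0 < β)
    (hcont : ∀ x y : X, |L x y| ≤ α * ‖x‖ * ‖y‖)
    (hinfsup : ∀ x : X, ∃ y : X, y ≠ 0 ∧ β * ‖x‖ * ‖y‖ ≤ L x y)
    (T : X →ₗ[ℝ] X) (hT : ∀ x y : X, ⟪N (T x), y⟫ = L x y) :
    (∀ x y : X, |L x y| ≤ (α / c₁) * Real.sqrt ⟪N x, x⟫ * Real.sqrt ⟪N y, y⟫) ∧
    (∀ x : X, ∃ y : X, y ≠ 0 ∧
      (β / c₂) * Real.sqrt ⟪N x, x⟫ * Real.sqrt ⟪N y, y⟫ ≤ L x y) ∧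
    (∃ C₁ C₂ : ℝ, 0 < C₁ ∧ 0 < C₂ ∧ C₁ * C₂ ≤ c₂ * α / (c₁ * β) ∧
      (∀ x : X, Real.sqrt ⟪N (T x), T x⟫ ≤ C₁ * Real.sqrt ⟪N x, x⟫) ∧
      (∀ x : X, Real.sqrt ⟪N x, x⟫ ≤ C₂ * Real.sqrt ⟪N (T x), T x⟫)) := by

  have hc₂ : 0 < c₂ := lt_of_lt_of_le hc₁ hc₁₂
  -- basic facts
  have qnn : ∀ x : X, 0 ≤ ⟪N x, x⟫ := by
    intro x
    rcases eq_or_ne x 0 with rfl | hx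
    · simp
    · exact (hNpos x hx).le
  have sqnn : ∀ x : X, 0 ≤ Real.sqrt ⟪N x, x⟫ := fun x => Real.sqrt_nonneg _
  have hlow : ∀ x : X, Real.sqrt c₁ * ‖x‖ ≤ Real.sqrt ⟪N x, x⟫ := by
    intro x
    have := Real.sqrt_le_sqrt (hnorm x).1
    rwa [Real.sqrt_mul hc₁.le, Real.sqrt_sq (norm_nonneg x)] at this
  have hhigh : ∀ x : X, Real.sqrt ⟪N x, x⟫ ≤ Real.sqrt c₂ * ‖x‖ := by
    intro x
    have := Real.sqrt_le_sqrt (hnorm x).2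
    rwa [Real.sqrt_mul hc₂.le, Real.sqrt_sq (norm_nonneg x)] at this
  have hs1 : Real.sqrt c₁ * Real.sqrt c₁ = c₁ := Real.mul_self_sqrt hc₁.le
  have hs2 : Real.sqrt c₂ * Real.sqrt c₂ = c₂ := Real.mul_self_sqrt hc₂.le
  have hs1p : 0 < Real.sqrt c₁ := Real.sqrt_pos.mpr hc₁
  have hs2p : 0 < Real.sqrt c₂ := Real.sqrt_pos.mpr hc₂
  -- Cauchy-Schwarz for the N-inner product
  have CS : ∀ a b : X, ⟪N a, b⟫ ≤ Real.sqrt ⟪N a, a⟫ * Real.sqrt ⟪N b, b⟫ := by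
    intro a b
    have hq : ∀ t : ℝ, 0 ≤ ⟪N b, b⟫ * (t * t) + (2 * ⟪N a, b⟫) * t + ⟪N a, a⟫ := by
      intro t
      have h0 := qnn (a + t • b)
      have hexp : ⟪N (a + t • b), a + t • b⟫
          = ⟪N b, b⟫ * (t * t) + (2 * ⟪N a, b⟫) * t + ⟪N a, a⟫ := by
        have hba : ⟪N b, a⟫ = ⟪N a, b⟫ := by
          rw [hNsym b a, real_inner_comm]
        simp only [map_add, map_smul, inner_add_add_self, inner_add_left,
          inner_add_right, inner_smul_left, inner_smul_right, real_inner_smul_left,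
          real_inner_smul_right, hba, starRingEnd_apply, star_trivial]
        ring
      linarith [hexp ▸ h0]
    have hd := discrim_le_zero hq
    rw [discrim] at hd
    have hsq : ⟪N a, b⟫ ^ 2 ≤ ⟪N a, a⟫ * ⟪N b, b⟫ := by nlinarith
    have hm : (Real.sqrt ⟪N a, a⟫ * Real.sqrt ⟪N b, b⟫) ^ 2 = ⟪N a, a⟫ * ⟪N b, b⟫ := by
      rw [mul_pow, Real.sq_sqrt (qnn a), Real.sq_sqrt (qnn b)]
    nlinarith [mul_nonneg (sqnn a) (sqnn b)]
  -- Part 1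
  have part1 : ∀ x y : X, |L x y| ≤ (α / c₁) * Real.sqrt ⟪N x, x⟫ * Real.sqrt ⟪N y, y⟫ := by
    intro x y
    have h1 := hlow x
    have h2 := hlow y
    have hmul : (Real.sqrt c₁ * ‖x‖) * (Real.sqrt c₁ * ‖y‖)
        ≤ Real.sqrt ⟪N x, x⟫ * Real.sqrt ⟪N y, y⟫ :=
      mul_le_mul h1 h2 (by positivity) (sqnn x)
    have key : c₁ * (‖x‖ * ‖y‖) ≤ Real.sqrt ⟪N x, x⟫ * Real.sqrt ⟪N y, y⟫ := by
      calc c₁ * (‖x‖ * ‖y‖) = Real.sqrt c₁ * ‖x‖ * (Real.sqrt c₁ * ‖y‖) := by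
            linear_combination (-(‖x‖ * ‖y‖)) * hs1
        _ ≤ _ := hmul
    calc |L x y| ≤ α * ‖x‖ * ‖y‖ := hcont x y
      _ = (α / c₁) * (c₁ * (‖x‖ * ‖y‖)) := by field_simp
      _ ≤ (α / c₁) * (Real.sqrt ⟪N x, x⟫ * Real.sqrt ⟪N y, y⟫) := by
          exact mul_le_mul_of_nonneg_left key (by positivity)
      _ = (α / c₁) * Real.sqrt ⟪N x, x⟫ * Real.sqrt ⟪N y, y⟫ := by ring
  -- Part 2
  have part2 : ∀ x : X, ∃ y : X, y ≠ 0 ∧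
      (β / c₂) * Real.sqrt ⟪N x, x⟫ * Real.sqrt ⟪N y, y⟫ ≤ L x y := by
    intro x
    obtain ⟨y, hy0, hy⟩ := hinfsup x
    refine ⟨y, hy0, ?_⟩
    have h1 := hhigh x
    have h2 := hhigh y
    have hmul : Real.sqrt ⟪N x, x⟫ * Real.sqrt ⟪N y, y⟫
        ≤ (Real.sqrt c₂ * ‖x‖) * (Real.sqrt c₂ * ‖y‖) :=
      mul_le_mul h1 h2 (sqnn y) (by positivity)
    have key : Real.sqrt ⟪N x, x⟫ * Real.sqrt ⟪N y, y⟫ ≤ c₂ * (‖x‖ * ‖y‖) := by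
      calc Real.sqrt ⟪N x, x⟫ * Real.sqrt ⟪N y, y⟫
          ≤ Real.sqrt c₂ * ‖x‖ * (Real.sqrt c₂ * ‖y‖) := hmul
        _ = c₂ * (‖x‖ * ‖y‖) := by linear_combination (‖x‖ * ‖y‖) * hs2
    calc (β / c₂) * Real.sqrt ⟪N x, x⟫ * Real.sqrt ⟪N y, y⟫
        = (β / c₂) * (Real.sqrt ⟪N x, x⟫ * Real.sqrt ⟪N y, y⟫) := by ring
      _ ≤ (β / c₂) * (c₂ * (‖x‖ * ‖y‖)) :=
          mul_le_mul_of_nonneg_left key (by positivity)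
      _ = β * ‖x‖ * ‖y‖ := by field_simp
      _ ≤ L x y := hy
  refine ⟨part1, part2, α / c₁, c₂ / β, by positivity, by positivity, ?_, ?_, ?_⟩
  · apply le_of_eq; field_simp
  · -- upper bound : sqrt ⟪N (T x), T x⟫ ≤ (α/c₁) sqrt ⟪N x, x⟫
    intro x
    have hq : ⟪N (T x), T x⟫ = L x (T x) := hT x (T x)
    have h1 : |L x (T x)| ≤ (α / c₁) * Real.sqrt ⟪N x, x⟫ * Real.sqrt ⟪N (T x), T x⟫ :=
      part1 x (T x)
    have h2 : ⟪N (T x), T x⟫ ≤ (α / c₁) * Real.sqrt ⟪N x, x⟫ * Real.sqrt ⟪N (T x), T x⟫ := by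
      calc ⟪N (T x), T x⟫ = L x (T x) := hq
        _ ≤ |L x (T x)| := le_abs_self _
        _ ≤ _ := h1
    have hsq : Real.sqrt ⟪N (T x), T x⟫ ^ 2 = ⟪N (T x), T x⟫ := Real.sq_sqrt (qnn (T x))
    rcases eq_or_lt_of_le (sqnn (T x)) with h0 | h0
    · rw [← h0]; positivity
    · have : Real.sqrt ⟪N (T x), T x⟫ * Real.sqrt ⟪N (T x), T x⟫
          ≤ ((α / c₁) * Real.sqrt ⟪N x, x⟫) * Real.sqrt ⟪N (T x), T x⟫ := by
        nlinarith
      exact le_of_mul_le_mul_right this h0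
  · -- lower bound : sqrt ⟪N x, x⟫ ≤ (c₂/β) sqrt ⟪N (T x), T x⟫
    intro x
    obtain ⟨y, hy0, hy⟩ := part2 x
    have hyp : 0 < Real.sqrt ⟪N y, y⟫ := Real.sqrt_pos.mpr (hNpos y hy0)
    have hcs : L x y ≤ Real.sqrt ⟪N (T x), T x⟫ * Real.sqrt ⟪N y, y⟫ := by
      rw [← hT x y]; exact CS (T x) y
    have key : (β / c₂) * Real.sqrt ⟪N x, x⟫ ≤ Real.sqrt ⟪N (T x), T x⟫ := by
      have h := le_trans hy hcs
      have := le_of_mul_le_mul_right (by nlinarith : ((β / c₂) * Real.sqrt ⟪N x, x⟫) * Real.sqrt ⟪N y, y⟫ ≤ Real.sqrt ⟪N (T x), T x⟫ * Real.sqrt ⟪N y, y⟫) hyp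
      exact this
    have hb : 0 < β / c₂ := by positivity
    calc Real.sqrt ⟪N x, x⟫ = (c₂ / β) * ((β / c₂) * Real.sqrt ⟪N x, x⟫) := by
          field_simp
      _ ≤ (c₂ / β) * Real.sqrt ⟪N (T x), T x⟫ :=
          mul_le_mul_of_nonneg_left key (by positivity)
end
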